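/- For 0 < p < 1, h(p²) < 2p·h(p), where h is the binary entropy function. -/

import Mathlib

noncomputable def binH (x : ℝ) : ℝ := -x * Real.log x - (1 - x) * Real.log (1 - x)

theorem stmt5 (p : ℝ) (hp : 0 < p) (hp1 : p < 1) :
    binH (p^2) < 2 * p * binH p := by
  have h1p : 0 < 1 - p := by linarith
  have h1p' : 0 < 1 + p := by linarith
  have h1 : Real.log (p^2) = 2 * Real.log p := by
    rw [Real.log_pow]; push_cast; ring
  have h3 : Real.log (1 - p^2) = Real.log (1-p) + Real.log (1+p) := by
    have : (1 - p^2) = (1-p)*(1+p) := by ring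
    rw [this, Real.log_mul (by positivity) (by positivity)]
  -- (1-p) * log(1-p) > -p
  have hA : (1-p) * Real.log (1-p) > -p := by
    have h := Real.log_lt_sub_one_of_pos (x := 1/(1-p)) (by positivity)
      (by field_simp; intro h; rw [div_eq_one_iff_eq h1p.ne'] at h; linarith)
    rw [Real.log_div one_ne_zero (by linarith), Real.log_one] at h
    have : (0:ℝ) - Real.log (1-p) < 1/(1-p) - 1 := h
    have h2 : -Real.log (1-p) < p/(1-p) := by
      have : 1/(1-p) - 1 = p/(1-p) := by field_simp; ring
      linarith [this ▸ h]
    have := (lt_div_iff₀ h1p).mp h2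
    nlinarith
  -- (1+p) * log(1+p) > p
  have hB : (1+p) * Real.log (1+p) > p := by
    have h := Real.log_lt_sub_one_of_pos (x := 1/(1+p)) (by positivity)
      (by field_simp; intro h; rw [div_eq_one_iff_eq h1p'.ne'] at h; linarith)
    rw [Real.log_div one_ne_zero (by linarith), Real.log_one] at h
    have h2 : -Real.log (1+p) < -p/(1+p) := by
      have : 1/(1+p) - 1 = -p/(1+p) := by field_simp; ring
      linarith [this ▸ h]
    have := (lt_div_iff₀ h1p').mp h2
    nlinarith
  simp only [binH, h1, h3]
  nlinarith [mul_pos h1p (by linarith [hA, hB] : (1-p) * Real.log (1-p) + (1+p) * Real.log (1+p) > 0)]
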